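/- Let L and T be even positive integers. Define the complex subspace S = { v ∈ ℂ^{L+T} : v_j = 0 for all indices j with (L+T)/2 < j ≤ L+T−1 } (coordinates indexed 0 through L+T−1) and let P : ℂ^{L+T} → ℂ^T be the projection onto the last T coordinates. Then the complex dimension of the subspace P(D_{L+T}^{-1}(S)) ⊆ ℂ^T equals min(T, (L+T)/2 + 1). In particular, P(D_{L+T}^{-1}(S)) = ℂ^T if and only if L ≥ T − 2. -/

import Mathlib

/-- The (unnormalised) discrete Fourier transform matrix `D_N`,
with entries `(D_N)_{jk} = exp(−2πi·jk/N)`. -/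
noncomputable def Dmat (N : ℕ) : Matrix (Fin N) (Fin N) ℂ :=
  Matrix.of fun j k =>
    Complex.exp (-(2 * (Real.pi : ℂ) * Complex.I * (j : ℕ) * (k : ℕ)) / N)

/-- The inverse DFT matrix `D_N⁻¹ = (1/N)·D_N^*`. -/
noncomputable def DmatInv (N : ℕ) : Matrix (Fin N) (Fin N) ℂ :=
  ((N : ℂ)⁻¹) • (Dmat N).conjTranspose

/-- The subspace `S = { v ∈ ℂ^n : v_j = 0 for all j > half }`. -/
noncomputable def Ssub (n half : ℕ) : Submodule ℂ (Fin n → ℂ) where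
  carrier := {v | ∀ j : Fin n, half < j.val → v j = 0}
  add_mem' := by
    intro u v hu hv j hj
    simp [hu j hj, hv j hj]
  zero_mem' := by
    intro j hj
    rfl
  smul_mem' := by
    intro c v hv j hj
    simp [hv j hj]

/-- The ℂ-linear projection of `ℂ^{L+T}` onto its last `T` coordinates, for
`L = 2·(a+1)`, `T = 2·(b+1)`, `L+T = 2·(a+b+2)`. -/
def lastT (a b : ℕ) : (Fin (2 * (a + b + 2)) → ℂ) →ₗ[ℂ] (Fin (2 * (b + 1)) → ℂ) where
  toFun v := fun t => v ⟨2 * (a + 1) + t.val, by have := t.isLt; omega⟩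
  map_add' := by intros; rfl
  map_smul' := by intros; rfl

/-- The subspace `P(D_{L+T}⁻¹(S)) ⊆ ℂ^T`. -/
noncomputable def Vsub (a b : ℕ) : Submodule ℂ (Fin (2 * (b + 1)) → ℂ) :=
  Submodule.map (lastT a b)
    (Submodule.map (Matrix.mulVecLin (DmatInv (2 * (a + b + 2))))
      (Ssub (2 * (a + b + 2)) (a + b + 2)))

/- ---------------- Auxiliary material ---------------- -/

/-- Extension by zero of `ℂ^m` into the first `m` coordinates of `ℂ^n`. -/
def toBig (n m : ℕ) (h : m ≤ n) : (Fin m → ℂ) →ₗ[ℂ] (Fin n → ℂ) where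
  toFun c := fun k => if hk : k.val < m then c ⟨k.val, hk⟩ else 0
  map_add' u v := by funext k; by_cases hk : k.val < m <;> simp [hk]
  map_smul' c v := by funext k; by_cases hk : k.val < m <;> simp [hk]

/-- Restriction to the first `m` coordinates. -/
def firstRows (T m : ℕ) (h : m ≤ T) : (Fin T → ℂ) →ₗ[ℂ] (Fin m → ℂ) where
  toFun v := fun i => v ⟨i.val, lt_of_lt_of_le i.isLt h⟩
  map_add' := by intros; rfl
  map_smul' := by intros; rfl

lemma sum_dite_lt {n m : ℕ} (h : m ≤ n) (f : Fin m → ℂ) :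
    (∑ k : Fin n, if hk : (k : ℕ) < m then f ⟨k, hk⟩ else 0) = ∑ j : Fin m, f j := by
  have h1 : (∑ k : Fin n, if hk : (k : ℕ) < m then f ⟨k, hk⟩ else 0)
      = ∑ i ∈ Finset.range n, (if hk : i < m then f ⟨i, hk⟩ else 0) :=
    Fin.sum_univ_eq_sum_range (fun i => if hk : i < m then f ⟨i, hk⟩ else 0) n
  have h2 : (∑ j : Fin m, f j)
      = ∑ i ∈ Finset.range m, (if hk : i < m then f ⟨i, hk⟩ else 0) := by
    rw [← Fin.sum_univ_eq_sum_range (fun i => if hk : i < m then f ⟨i, hk⟩ else 0) m]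
    exact Finset.sum_congr rfl fun j _ => by rw [dif_pos j.isLt]
  rw [h1, h2]
  exact (Finset.sum_subset (Finset.range_subset_range.2 h)
    (fun x _ hx => dif_neg (by simpa using hx))).symm

lemma mulVecLin_comp_toBig {T n m : ℕ} (h : m ≤ n) (B : Matrix (Fin T) (Fin n) ℂ) :
    (Matrix.mulVecLin B) ∘ₗ toBig n m h
      = Matrix.mulVecLin
          (Matrix.of fun t (j : Fin m) => B t ⟨j.val, lt_of_lt_of_le j.isLt h⟩) := by
  apply LinearMap.ext; intro c; funext t
  simp only [LinearMap.comp_apply, Matrix.mulVecLin_apply, Matrix.mulVec, dotProduct,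
    toBig, LinearMap.coe_mk, AddHom.coe_mk, Matrix.of_apply]
  simp only [mul_dite, mul_zero]
  exact sum_dite_lt h fun j => B t ⟨j.val, lt_of_lt_of_le j.isLt h⟩ * c j

lemma firstRows_comp_mulVecLin {T n m : ℕ} (h : m ≤ T) (B : Matrix (Fin T) (Fin n) ℂ) :
    (firstRows T m h) ∘ₗ (Matrix.mulVecLin B)
      = Matrix.mulVecLin
          (Matrix.of fun (i : Fin m) j => B ⟨i.val, lt_of_lt_of_le i.isLt h⟩ j) := rfl

lemma Ssub_eq_range (n half m : ℕ) (hm : half + 1 = m) (h : m ≤ n) :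
    Ssub n half = LinearMap.range (toBig n m h) := by
  subst hm
  ext v
  simp only [LinearMap.mem_range]
  constructor
  · intro hv
    have hv' : ∀ j : Fin n, half < j.val → v j = 0 := hv
    refine ⟨fun j => v ⟨j.val, lt_of_lt_of_le j.isLt h⟩, ?_⟩
    funext k
    by_cases hk : k.val < half + 1
    · simp only [toBig, LinearMap.coe_mk, AddHom.coe_mk, dif_pos hk]
    · simp only [toBig, LinearMap.coe_mk, AddHom.coe_mk, dif_neg hk]
      exact (hv' k (by omega)).symm
  · rintro ⟨c, rfl⟩
    intro j hj
    simp only [toBig, LinearMap.coe_mk, AddHom.coe_mk]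
    rw [dif_neg (by omega)]

lemma DmatInv_apply (N : ℕ) (j k : Fin N) :
    DmatInv N j k
      = (N : ℂ)⁻¹ * Complex.exp (2 * (Real.pi : ℂ) * Complex.I * (j : ℕ) * (k : ℕ) / N) := by
  simp only [DmatInv, Dmat, Matrix.smul_apply, Matrix.conjTranspose_apply, Matrix.of_apply,
    smul_eq_mul]
  congr 1
  rw [← starRingEnd_apply, ← Complex.exp_conj]
  congr 1
  simp only [map_div₀, map_neg, map_mul, Complex.conj_I, Complex.conj_ofReal, map_ofNat,
    Complex.conj_natCast]
  ring

/-- The key nonvanishing determinant: a square "shifted Vandermonde" block of the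
inverse DFT matrix. -/
lemma det_ne_zero {n m L : ℕ} (hn : 0 < n) (hmn : m ≤ n)
    (M : Matrix (Fin m) (Fin m) ℂ)
    (hM : ∀ i j : Fin m, M i j = (n : ℂ)⁻¹ *
      Complex.exp (2 * (Real.pi : ℂ) * Complex.I * ((L + i.val : ℕ) : ℂ) * ((j.val : ℕ) : ℂ) / n)) :
    M.det ≠ 0 := by
  set ζ : ℂ := Complex.exp (2 * (Real.pi : ℂ) * Complex.I / n) with hζdef
  have hζ : IsPrimitiveRoot ζ n := Complex.isPrimitiveRoot_exp n hn.ne'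
  have hMeq : M = (Matrix.diagonal (fun j : Fin m => (n : ℂ)⁻¹ * ζ ^ (j.val * L))
      * Matrix.vandermonde (fun j : Fin m => ζ ^ j.val)).transpose := by
    ext i j
    rw [Matrix.transpose_apply, Matrix.diagonal_mul, Matrix.vandermonde_apply, hM]
    rw [← pow_mul, mul_assoc ((n : ℂ)⁻¹) (ζ ^ (j.val * L)) (ζ ^ (j.val * i.val)), ← pow_add,
      hζdef, ← Complex.exp_nat_mul]
    congr 1
    push_cast
    ring
  rw [hMeq, Matrix.det_transpose, Matrix.det_mul, Matrix.det_diagonal]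
  apply mul_ne_zero
  · exact Finset.prod_ne_zero_iff.2 fun j _ =>
      mul_ne_zero (inv_ne_zero (Nat.cast_ne_zero.2 hn.ne'))
        (pow_ne_zero _ (Complex.exp_ne_zero _))
  · rw [Matrix.det_vandermonde_ne_zero_iff]
    intro i j hij
    exact Fin.ext (hζ.pow_inj (lt_of_lt_of_le i.isLt hmn) (lt_of_lt_of_le j.isLt hmn) hij)

/-- The rectangular matrix representing `P ∘ D⁻¹ ∘ (extension of S)`. -/
noncomputable def Amat (a b : ℕ) : Matrix (Fin (2 * (b + 1))) (Fin (a + b + 3)) ℂ :=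
  Matrix.of fun t j =>
    DmatInv (2 * (a + b + 2)) ⟨2 * (a + 1) + t.val, by have := t.isLt; omega⟩
      ⟨j.val, by have := j.isLt; omega⟩

lemma Vsub_eq (a b : ℕ) :
    Vsub a b = LinearMap.range (Matrix.mulVecLin (Amat a b)) := by
  have h : a + b + 3 ≤ 2 * (a + b + 2) := by omega
  rw [Vsub, Ssub_eq_range (2 * (a + b + 2)) (a + b + 2) (a + b + 3) rfl h,
    ← LinearMap.range_comp, ← LinearMap.range_comp, ← LinearMap.comp_assoc]
  congr 1
  have h1 : (lastT a b) ∘ₗ Matrix.mulVecLin (DmatInv (2 * (a + b + 2)))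
      = Matrix.mulVecLin (Matrix.of fun (t : Fin (2 * (b + 1))) (k : Fin (2 * (a + b + 2))) =>
          DmatInv (2 * (a + b + 2)) ⟨2 * (a + 1) + t.val, by have := t.isLt; omega⟩ k) := rfl
  rw [h1, mulVecLin_comp_toBig h]
  rfl

/-- with `S = {v ∈ ℂ^{L+T} : v_j = 0 for j > (L+T)/2}` and `P` the
projection onto the last `T` coordinates, `dim P(D_{L+T}⁻¹(S)) = min(T, (L+T)/2 + 1)`;
in particular `P(D_{L+T}⁻¹(S)) = ℂ^T` iff `L ≥ T − 2`.
Here `L = 2·(a+1)`, `T = 2·(b+1)`, `(L+T)/2 = a+b+2`. -/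
theorem fits_forecast_dimension (a b : ℕ) :
    Module.finrank ℂ (Vsub a b) = min (2 * (b + 1)) (a + b + 3) ∧
    (Vsub a b = ⊤ ↔ 2 * (a + 1) ≥ 2 * (b + 1) - 2) := by
  have hn : 0 < 2 * (a + b + 2) := by omega
  have key : Module.finrank ℂ (Vsub a b) = min (2 * (b + 1)) (a + b + 3) := by
    rw [Vsub_eq]
    rcases le_or_gt (2 * (b + 1)) (a + b + 3) with hTm | hmT
    · -- surjective case: T ≤ m
      set M₂ : Matrix (Fin (2 * (b + 1))) (Fin (2 * (b + 1))) ℂ :=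
        Matrix.of fun t (j : Fin (2 * (b + 1))) =>
          Amat a b t ⟨j.val, lt_of_lt_of_le j.isLt hTm⟩ with hM₂def
      have hdet : M₂.det ≠ 0 := by
        refine det_ne_zero (L := 2 * (a + 1)) hn (by omega) M₂ fun i j => ?_
        show Amat a b i ⟨j.val, _⟩ = _
        rw [Amat, Matrix.of_apply, DmatInv_apply]
      have hunit : IsUnit M₂ := (Matrix.isUnit_iff_isUnit_det M₂).2 (isUnit_iff_ne_zero.2 hdet)
      have hM2surj : Function.Surjective (Matrix.mulVecLin M₂) := by
        exact Matrix.mulVec_surjective_iff_isUnit.2 hunit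
      have hcomp := mulVecLin_comp_toBig hTm (Amat a b)
      have hcs : Function.Surjective
          ((Matrix.mulVecLin (Amat a b)) ∘ₗ toBig (a + b + 3) (2 * (b + 1)) hTm) := by
        rw [hcomp]; exact hM2surj
      rw [LinearMap.coe_comp] at hcs
      have hsurj := Function.Surjective.of_comp hcs
      rw [LinearMap.range_eq_top.2 hsurj, finrank_top, Module.finrank_fin_fun]
      omega
    · -- injective case: m ≤ T
      have hmT' : a + b + 3 ≤ 2 * (b + 1) := le_of_lt hmT
      set M₁ : Matrix (Fin (a + b + 3)) (Fin (a + b + 3)) ℂ :=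
        Matrix.of fun (i : Fin (a + b + 3)) j =>
          Amat a b ⟨i.val, lt_of_lt_of_le i.isLt hmT'⟩ j with hM₁def
      have hdet : M₁.det ≠ 0 := by
        refine det_ne_zero (L := 2 * (a + 1)) hn (by omega) M₁ fun i j => ?_
        show Amat a b ⟨i.val, _⟩ j = _
        rw [Amat, Matrix.of_apply, DmatInv_apply]
      have hunit : IsUnit M₁ := (Matrix.isUnit_iff_isUnit_det M₁).2 (isUnit_iff_ne_zero.2 hdet)
      have hM1inj : Function.Injective (Matrix.mulVecLin M₁) := by
        exact Matrix.mulVec_injective_iff_isUnit.2 hunit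
      have hcomp := firstRows_comp_mulVecLin hmT' (Amat a b)
      have hci : Function.Injective
          ((firstRows (2 * (b + 1)) (a + b + 3) hmT') ∘ₗ Matrix.mulVecLin (Amat a b)) := by
        rw [hcomp]; exact hM1inj
      rw [LinearMap.coe_comp] at hci
      have hinj := Function.Injective.of_comp hci
      rw [LinearMap.finrank_range_of_inj hinj, Module.finrank_fin_fun]
      omega
  refine ⟨key, ?_, ?_⟩
  · intro h
    rw [h, finrank_top, Module.finrank_fin_fun] at key
    omega
  · intro h
    apply Submodule.eq_top_of_finrank_eq
    rw [key, Module.finrank_fin_fun]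
    omega
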